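/- arXiv:1010.2444 — 3 statements merged into one kernel-verified Lean document; each statement's English description precedes it below -/
import Mathlib

section
/- For every prime ℓ, integer g ≥ 1, and λ ∈ F_ℓ^×, the number of symplectic similitudes of F_ℓ^{2g} with multiplier λ having eigenvalue 1 is at most ℓ^{2g-1}·((ℓ^{2g}-1)/(ℓ-1))·|Sp_{2g-2}(F_ℓ)|. -/
open Matrix

/-- The set of symplectic similitudes of `R^{2g}` with multiplier `lam`
(with respect to the canonical symplectic form given by `Matrix.J`). -/
def GSpMul (g : ℕ) (R : Type*) [CommRing R] (lam : R) :
    Set (Matrix (Fin g ⊕ Fin g) (Fin g ⊕ Fin g) R) :=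
  {A | IsUnit A ∧ A * Matrix.J (Fin g) R * Aᵀ = lam • Matrix.J (Fin g) R}

namespace CardSimAux

variable {F : Type*} [Field F] {n g : ℕ}

/-- The symplectic bilinear form in coordinates. -/
def Bf (x y : Fin n ⊕ Fin n → F) : F :=
  ∑ i : Fin n, (x (Sum.inr i) * y (Sum.inl i) - x (Sum.inl i) * y (Sum.inr i))

lemma J_mulVec (y : Fin n ⊕ Fin n → F) :
    Matrix.J (Fin n) F *ᵥ y = Sum.elim (fun i => -(y (Sum.inr i))) (fun i => y (Sum.inl i)) := by
  funext i
  cases i with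
  | inl i =>
    simp only [Matrix.J, mulVec, dotProduct, Fintype.sum_sum_type, Sum.elim_inl,
      fromBlocks_apply₁₁, fromBlocks_apply₁₂, Matrix.zero_apply, zero_mul, Finset.sum_const_zero,
      zero_add, Matrix.neg_apply]
    rw [Finset.sum_eq_single i] <;> simp +contextual [one_apply, eq_comm]
  | inr i =>
    simp only [Matrix.J, mulVec, dotProduct, Fintype.sum_sum_type, Sum.elim_inr,
      fromBlocks_apply₂₁, fromBlocks_apply₂₂, Matrix.zero_apply, zero_mul,
      Finset.sum_const_zero, add_zero]
    rw [Finset.sum_eq_single i] <;> simp +contextual [one_apply, eq_comm]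

lemma dot_J (x y : Fin n ⊕ Fin n → F) : x ⬝ᵥ (Matrix.J (Fin n) F *ᵥ y) = Bf x y := by
  rw [J_mulVec, Bf]
  rw [dotProduct, Fintype.sum_sum_type, ← Finset.sum_add_distrib]
  apply Finset.sum_congr rfl; intro i _; simp; ring

lemma Bf_self (x : Fin n ⊕ Fin n → F) : Bf x x = 0 := by
  apply Finset.sum_eq_zero; intro i _; ring

lemma Bf_skew (x y : Fin n ⊕ Fin n → F) : Bf y x = -Bf x y := by
  rw [Bf, Bf, ← Finset.sum_neg_distrib]
  apply Finset.sum_congr rfl; intro i _; ring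

lemma Bf_sub_left (x y z : Fin n ⊕ Fin n → F) : Bf (x - y) z = Bf x z - Bf y z := by
  rw [Bf, Bf, Bf, ← Finset.sum_sub_distrib]
  apply Finset.sum_congr rfl; intro i _; simp [Pi.sub_apply]; ring

lemma Bf_add_right (x y z : Fin n ⊕ Fin n → F) : Bf x (y + z) = Bf x y + Bf x z := by
  rw [Bf, Bf, Bf, ← Finset.sum_add_distrib]
  apply Finset.sum_congr rfl; intro i _; simp [Pi.add_apply]; ring

lemma vecMulVec_mul (a b : Fin n ⊕ Fin n → F) (M : Matrix (Fin n ⊕ Fin n) (Fin n ⊕ Fin n) F) :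
    vecMulVec a b * M = vecMulVec a (b ᵥ* M) := by
  ext i j
  rw [mul_apply, vecMulVec_apply, vecMul, dotProduct, Finset.mul_sum]
  apply Finset.sum_congr rfl; intro k _; rw [vecMulVec_apply]; ring

lemma mul_vecMulVec (a b : Fin n ⊕ Fin n → F) (M : Matrix (Fin n ⊕ Fin n) (Fin n ⊕ Fin n) F) :
    M * vecMulVec a b = vecMulVec (M *ᵥ a) b := by
  ext i j
  rw [mul_apply, vecMulVec_apply, mulVec, dotProduct, Finset.sum_mul]
  apply Finset.sum_congr rfl; intro k _; rw [vecMulVec_apply]; ring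

lemma vecMulVec_mulVec (a b x : Fin n ⊕ Fin n → F) :
    vecMulVec a b *ᵥ x = (b ⬝ᵥ x) • a := by
  funext i
  rw [mulVec, dotProduct, Pi.smul_apply, dotProduct, smul_eq_mul, Finset.sum_mul]
  apply Finset.sum_congr rfl; intro k _; rw [vecMulVec_apply]; ring

lemma vecMulVec_vecMulVec (a b c d : Fin n ⊕ Fin n → F) :
    vecMulVec a b * vecMulVec c d = (b ⬝ᵥ c) • vecMulVec a d := by
  ext i j
  rw [mul_apply, Matrix.smul_apply, vecMulVec_apply, smul_eq_mul, dotProduct, Finset.sum_mul]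
  apply Finset.sum_congr rfl; intro k _; rw [vecMulVec_apply, vecMulVec_apply]; ring

lemma vecMulVec_transpose (a b : Fin n ⊕ Fin n → F) :
    (vecMulVec a b)ᵀ = vecMulVec b a := by
  ext i j; rw [transpose_apply, vecMulVec_apply, vecMulVec_apply]; ring

/-- symplectic transvection -/
def Tv (v : Fin n ⊕ Fin n → F) (c : F) : Matrix (Fin n ⊕ Fin n) (Fin n ⊕ Fin n) F :=
  1 + c • vecMulVec v (v ᵥ* Matrix.J (Fin n) F)

lemma vecMul_J_eq (v : Fin n ⊕ Fin n → F) :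
    v ᵥ* Matrix.J (Fin n) F = -(Matrix.J (Fin n) F *ᵥ v) := by
  rw [← mulVec_transpose, J_transpose, neg_mulVec]

lemma J_mulVec_vecMul (v : Fin n ⊕ Fin n → F) :
    Matrix.J (Fin n) F *ᵥ (v ᵥ* Matrix.J (Fin n) F) = v := by
  rw [vecMul_J_eq, mulVec_neg, mulVec_mulVec, J_squared, neg_mulVec, one_mulVec, neg_neg]

lemma vecMul_J_vecMul (v : Fin n ⊕ Fin n → F) :
    (v ᵥ* Matrix.J (Fin n) F) ᵥ* Matrix.J (Fin n) F = -v := by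
  rw [vecMul_vecMul, J_squared]
  funext i; simp [vecMul, dotProduct, neg_apply, one_apply]

lemma uv_dot (v : Fin n ⊕ Fin n → F) : (v ᵥ* Matrix.J (Fin n) F) ⬝ᵥ v = 0 := by
  rw [← dotProduct_mulVec, dot_J, Bf_self]

lemma vu_dot (v : Fin n ⊕ Fin n → F) : v ⬝ᵥ (v ᵥ* Matrix.J (Fin n) F) = 0 := by
  rw [dotProduct_comm, uv_dot]

lemma Tv_mul_Tv_neg (v : Fin n ⊕ Fin n → F) (c : F) : Tv v c * Tv v (-c) = 1 := by
  rw [Tv, Tv]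
  rw [add_mul, mul_add, mul_add, one_mul, mul_one, smul_mul_smul_comm,
    vecMulVec_vecMulVec, uv_dot]
  simp

lemma Tv_J (v : Fin n ⊕ Fin n → F) (c : F) :
    Tv v c * Matrix.J (Fin n) F * (Tv v c)ᵀ = Matrix.J (Fin n) F := by
  have hNJ : vecMulVec v (v ᵥ* Matrix.J (Fin n) F) * Matrix.J (Fin n) F
      = -(vecMulVec v v) := by
    rw [vecMulVec_mul, vecMul_J_vecMul]
    ext i j; simp [vecMulVec_apply]
  have hJN : Matrix.J (Fin n) F * vecMulVec (v ᵥ* Matrix.J (Fin n) F) v = vecMulVec v v := by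
    rw [mul_vecMulVec, J_mulVec_vecMul]
  rw [Tv, transpose_add, transpose_one, transpose_smul, vecMulVec_transpose,
    add_mul, one_mul, smul_mul_assoc, hNJ, mul_add, mul_one, add_mul, mul_smul_comm, hJN,
    smul_mul_smul_comm, neg_mul, vecMulVec_vecMulVec, vu_dot]
  simp

lemma Tv_mulVec (v x : Fin n ⊕ Fin n → F) (c : F) :
    Tv v c *ᵥ x = x + (c * Bf v x) • v := by
  rw [Tv, add_mulVec, one_mulVec, smul_mulVec, vecMulVec_mulVec,
    ← dotProduct_mulVec, dot_J, smul_smul]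

lemma exists_Bf_ne {w : Fin n ⊕ Fin n → F} (hw : w ≠ 0) : ∃ z, Bf w z ≠ 0 := by
  obtain ⟨j, hj⟩ := Function.ne_iff.mp hw
  cases j with
  | inl i =>
    refine ⟨Pi.single (Sum.inr i) 1, ?_⟩
    have : Bf w (Pi.single (Sum.inr i) 1) = -(w (Sum.inl i)) := by
      rw [Bf, Finset.sum_eq_single i]
      · simp [Pi.single_apply]
      · intro k _ hk; simp [Pi.single_apply, hk]
      · simp
    rw [this]
    simpa using hj
  | inr i =>
    refine ⟨Pi.single (Sum.inl i) 1, ?_⟩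
    have : Bf w (Pi.single (Sum.inl i) 1) = w (Sum.inr i) := by
      rw [Bf, Finset.sum_eq_single i]
      · simp [Pi.single_apply]
      · intro k _ hk; simp [Pi.single_apply, hk]
      · simp
    rw [this]
    simpa using hj

lemma step {x y : Fin n ⊕ Fin n → F} (h : Bf x y ≠ 0) :
    ∃ T T' : Matrix (Fin n ⊕ Fin n) (Fin n ⊕ Fin n) F,
      T * T' = 1 ∧ T' * T = 1 ∧ T * Matrix.J (Fin n) F * Tᵀ = Matrix.J (Fin n) F ∧
        T *ᵥ x = y := by
  set v := y - x with hv
  have hBvx : Bf v x = -Bf x y := by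
    rw [hv, Bf_sub_left, Bf_self, ← Bf_skew]; ring
  set c := (Bf v x)⁻¹ with hc
  refine ⟨Tv v c, Tv v (-c), ?_, ?_, Tv_J v c, ?_⟩
  · exact Tv_mul_Tv_neg v c
  · have := Tv_mul_Tv_neg v (-c); rwa [neg_neg] at this
  · rw [Tv_mulVec, hc, inv_mul_cancel₀ (by rw [hBvx]; simpa using h), one_smul, hv]
    abel

lemma exists_trans {u w : Fin n ⊕ Fin n → F} (hu : u ≠ 0) (hw : w ≠ 0) :
    ∃ P Q : Matrix (Fin n ⊕ Fin n) (Fin n ⊕ Fin n) F,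
      P * Q = 1 ∧ Q * P = 1 ∧ P * Matrix.J (Fin n) F * Pᵀ = Matrix.J (Fin n) F ∧
        P *ᵥ u = w := by
  obtain ⟨zu, hzu⟩ := exists_Bf_ne hu
  obtain ⟨zw, hzw⟩ := exists_Bf_ne hw
  have hz : ∃ z, Bf u z ≠ 0 ∧ Bf w z ≠ 0 := by
    by_cases h1 : Bf u zw ≠ 0
    · exact ⟨zw, h1, hzw⟩
    · by_cases h2 : Bf w zu ≠ 0
      · exact ⟨zu, hzu, h2⟩
      · push_neg at h1 h2
        exact ⟨zu + zw, by rw [Bf_add_right, h1, add_zero]; exact hzu,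
          by rw [Bf_add_right, h2, zero_add]; exact hzw⟩
  obtain ⟨z, hz1, hz2⟩ := hz
  obtain ⟨T₁, T₁', h11, h12, h13, h14⟩ := step hz1
  have hz2' : Bf z w ≠ 0 := by rw [Bf_skew]; simpa using hz2
  obtain ⟨T₂, T₂', h21, h22, h23, h24⟩ := step hz2'
  refine ⟨T₂ * T₁, T₁' * T₂', ?_, ?_, ?_, ?_⟩
  · rw [mul_assoc, ← mul_assoc T₁, h11, one_mul, h21]
  · rw [mul_assoc, ← mul_assoc T₂', h22, one_mul, h12]
  · rw [transpose_mul, show T₂ * T₁ * Matrix.J (Fin n) F * (T₁ᵀ * T₂ᵀ)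
      = T₂ * (T₁ * Matrix.J (Fin n) F * T₁ᵀ) * T₂ᵀ by noncomm_ring, h13, h23]
  · rw [← mulVec_mulVec, h14, h24]

-- J entries
lemma J_ll (i j : Fin n) : Matrix.J (Fin n) F (.inl i) (.inl j) = 0 := rfl
lemma J_rr (i j : Fin n) : Matrix.J (Fin n) F (.inr i) (.inr j) = 0 := rfl
lemma J_lr (i j : Fin n) :
    Matrix.J (Fin n) F (.inl i) (.inr j) = -(if i = j then 1 else 0) := by
  simp [Matrix.J, fromBlocks_apply₁₂, one_apply]
lemma J_rl (i j : Fin n) :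
    Matrix.J (Fin n) F (.inr i) (.inl j) = if i = j then 1 else 0 := by
  simp [Matrix.J, fromBlocks_apply₂₁, one_apply]

lemma simil_transpose {A B : Matrix (Fin n ⊕ Fin n) (Fin n ⊕ Fin n) F} {lam : F}
    (hBA : B * A = 1) (hS : A * Matrix.J (Fin n) F * Aᵀ = lam • Matrix.J (Fin n) F) :
    Aᵀ * Matrix.J (Fin n) F * A = lam • Matrix.J (Fin n) F := by
  set J' := Matrix.J (Fin n) F
  have hJ : (-J') * J' = 1 := by rw [neg_mul, J_squared, neg_neg]
  have h1 : J' * Aᵀ = lam • (B * J') := by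
    have := congrArg (fun X => B * X) hS
    simp only [← mul_assoc, hBA, one_mul, mul_smul_comm] at this
    exact this
  have h2 : Aᵀ = lam • (-J' * B * J') := by
    have := congrArg (fun X => (-J') * X) h1
    simp only [← mul_assoc, hJ, one_mul, mul_smul_comm] at this
    exact this
  calc Aᵀ * J' * A = lam • (-J' * B * J' * J' * A) := by
        rw [h2]; simp [smul_mul_assoc]
    _ = lam • (-(J' * B) * (J' * J') * A) := by congr 1; noncomm_ring
    _ = lam • (J' * (B * A)) := by rw [J_squared]; congr 1; noncomm_ring
    _ = lam • J' := by rw [hBA, mul_one]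

lemma entry_form (X : Matrix (Fin n ⊕ Fin n) (Fin n ⊕ Fin n) F) (j j' : Fin n ⊕ Fin n) :
    (Xᵀ * Matrix.J (Fin n) F * X) j j' = Bf (fun i => X i j) (fun i => X i j') := by
  rw [mul_assoc, mul_apply, ← dot_J, dotProduct]
  apply Finset.sum_congr rfl
  intro k _
  rw [transpose_apply, mul_apply]
  rfl

/-- embedding of small index type into the big one -/
def em (g : ℕ) : Fin g ⊕ Fin g → Fin (g + 1) ⊕ Fin (g + 1) :=
  Sum.map Fin.succ Fin.succ

lemma tri (j : Fin (g + 1) ⊕ Fin (g + 1)) :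
    j = Sum.inl 0 ∨ j = Sum.inr 0 ∨ ∃ q, j = em g q := by
  cases j with
  | inl i =>
    cases i using Fin.cases with
    | zero => exact Or.inl rfl
    | succ k => exact Or.inr (Or.inr ⟨Sum.inl k, rfl⟩)
  | inr i =>
    cases i using Fin.cases with
    | zero => exact Or.inr (Or.inl rfl)
    | succ k => exact Or.inr (Or.inr ⟨Sum.inr k, rfl⟩)

lemma J_a_em (q : Fin g ⊕ Fin g) :
    Matrix.J (Fin (g+1)) F (Sum.inr 0) (em g q) = 0 := by
  cases q with
  | inl k =>
    simp only [em, Sum.map_inl, J_rl]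
    simp [(Fin.succ_ne_zero k).symm]
  | inr k => simp only [em, Sum.map_inr, J_rr]

lemma J_em_b (q : Fin g ⊕ Fin g) :
    Matrix.J (Fin (g+1)) F (em g q) (Sum.inl 0) = 0 := by
  cases q with
  | inl k => simp only [em, Sum.map_inl, J_ll]
  | inr k =>
    simp only [em, Sum.map_inr, J_rl]
    simp [Fin.succ_ne_zero k]

lemma J_em_em (p q : Fin g ⊕ Fin g) :
    Matrix.J (Fin (g+1)) F (em g p) (em g q) = Matrix.J (Fin g) F p q := by
  cases p <;> cases q <;>
    simp only [em, Sum.map_inl, Sum.map_inr, J_ll, J_rr, J_lr, J_rl, Fin.succ_inj]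

lemma Bf_split (x y : Fin (g + 1) ⊕ Fin (g + 1) → F) :
    Bf x y = (x (Sum.inr 0) * y (Sum.inl 0) - x (Sum.inl 0) * y (Sum.inr 0))
      + Bf (x ∘ em g) (y ∘ em g) := by
  rw [Bf, Fin.sum_univ_succ]
  congr 1

lemma cols_form {lam : F} {A : Matrix (Fin n ⊕ Fin n) (Fin n ⊕ Fin n) F}
    (hU : IsUnit A) (hS : A * Matrix.J (Fin n) F * Aᵀ = lam • Matrix.J (Fin n) F) :
    ∀ j j', Bf (fun i => A i j) (fun i => A i j')
      = lam * Matrix.J (Fin n) F j j' := by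
  intro j j'
  obtain ⟨u, rfl⟩ := hU
  have hA2 := simil_transpose (B := ((u⁻¹ : _ˣ) : Matrix _ _ F)) u.inv_mul hS
  have := congrFun (congrFun hA2 j) j'
  rw [entry_form] at this
  rw [this, Matrix.smul_apply, smul_eq_mul]

lemma row_b {lam : F} {A : Matrix (Fin (g+1) ⊕ Fin (g+1)) (Fin (g+1) ⊕ Fin (g+1)) F}
    (hfix : ∀ i, A i (Sum.inr 0) = if i = Sum.inr 0 then 1 else 0)
    (hB : ∀ j j', Bf (fun i => A i j) (fun i => A i j')
      = lam * Matrix.J (Fin (g+1)) F j j') :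
    ∀ j, A (Sum.inl 0) j = lam * Matrix.J (Fin (g+1)) F (Sum.inr 0) j := by
  intro j
  have h := hB (Sum.inr 0) j
  rw [Bf_split] at h
  have hz : ∀ q, (fun i => A i (Sum.inr 0)) (em g q) = 0 := by
    intro q; cases q with
    | inl k => simp [em, hfix]
    | inr k => simp [em, hfix, Fin.succ_ne_zero]
  have hBz : Bf ((fun i => A i (Sum.inr 0)) ∘ em g) ((fun i => A i j) ∘ em g) = 0 := by
    apply Finset.sum_eq_zero; intro i _
    simp [Function.comp, hz (Sum.inl i), hz (Sum.inr i)]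
  rw [hBz] at h
  simp only [hfix] at h
  simpa using h

lemma rec_id {lam : F} {A : Matrix (Fin (g+1) ⊕ Fin (g+1)) (Fin (g+1) ⊕ Fin (g+1)) F}
    (hB : ∀ j j', Bf (fun i => A i j) (fun i => A i j')
      = lam * Matrix.J (Fin (g+1)) F j j')
    (hrw : ∀ j, A (Sum.inl 0) j = lam * Matrix.J (Fin (g+1)) F (Sum.inr 0) j) :
    ∀ p, A (Sum.inr 0) (em g p) * lam
        + Bf (fun q => A (em g q) (em g p)) (fun q => A (em g q) (Sum.inl 0)) = 0 := by
  intro p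
  have h := hB (em g p) (Sum.inl 0)
  rw [Bf_split] at h
  have hABl : A (Sum.inl 0) (Sum.inl 0) = lam := by
    rw [hrw, J_rl, if_pos rfl, mul_one]
  have hABem : A (Sum.inl 0) (em g p) = 0 := by
    rw [hrw, J_a_em, mul_zero]
  rw [J_em_b, mul_zero, hABl, hABem] at h
  convert h using 2
  ring
  rfl

lemma small_form {lam : F} {A : Matrix (Fin (g+1) ⊕ Fin (g+1)) (Fin (g+1) ⊕ Fin (g+1)) F}
    (hB : ∀ j j', Bf (fun i => A i j) (fun i => A i j')
      = lam * Matrix.J (Fin (g+1)) F j j')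
    (hrw : ∀ j, A (Sum.inl 0) j = lam * Matrix.J (Fin (g+1)) F (Sum.inr 0) j) :
    (Matrix.of fun p q => A (em g p) (em g q))ᵀ * Matrix.J (Fin g) F
      * (Matrix.of fun p q => A (em g p) (em g q)) = lam • Matrix.J (Fin g) F := by
  ext p q
  rw [entry_form]
  have h := hB (em g p) (em g q)
  rw [Bf_split] at h
  have h1 : A (Sum.inl 0) (em g p) = 0 := by rw [hrw, J_a_em, mul_zero]
  have h2 : A (Sum.inl 0) (em g q) = 0 := by rw [hrw, J_a_em, mul_zero]
  rw [h1, h2, mul_zero, zero_mul, sub_zero, zero_add, J_em_em] at h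
  rw [Matrix.smul_apply, smul_eq_mul]
  exact h

/-- The key extensionality lemma for the stabilizer of the base vector. -/
lemma stab_ext {lam : F} (hlam : lam ≠ 0)
    {A₁ A₂ : Matrix (Fin (g+1) ⊕ Fin (g+1)) (Fin (g+1) ⊕ Fin (g+1)) F}
    (hU₁ : IsUnit A₁) (hU₂ : IsUnit A₂)
    (hS₁ : A₁ * Matrix.J (Fin (g+1)) F * A₁ᵀ = lam • Matrix.J (Fin (g+1)) F)
    (hS₂ : A₂ * Matrix.J (Fin (g+1)) F * A₂ᵀ = lam • Matrix.J (Fin (g+1)) F)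
    (hfix₁ : ∀ i, A₁ i (Sum.inr 0) = if i = Sum.inr 0 then 1 else 0)
    (hfix₂ : ∀ i, A₂ i (Sum.inr 0) = if i = Sum.inr 0 then 1 else 0)
    (e1 : A₁ (Sum.inr 0) (Sum.inl 0) = A₂ (Sum.inr 0) (Sum.inl 0))
    (e2 : ∀ q, A₁ (em g q) (Sum.inl 0) = A₂ (em g q) (Sum.inl 0))
    (e3 : ∀ p q, A₁ (em g p) (em g q) = A₂ (em g p) (em g q)) :
    A₁ = A₂ := by
  have hB₁ := cols_form hU₁ hS₁
  have hB₂ := cols_form hU₂ hS₂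
  have hrow₁ := row_b hfix₁ hB₁
  have hrow₂ := row_b hfix₂ hB₂
  have hrec₁ := rec_id hB₁ hrow₁
  have hrec₂ := rec_id hB₂ hrow₂
  funext i j
  rcases tri i with hi | hi | ⟨p, hi⟩ <;> subst hi
  · rw [hrow₁, hrow₂]
  · rcases tri j with hj | hj | ⟨q, hj⟩ <;> subst hj
    · exact e1
    · rw [hfix₁, hfix₂]
    · have h1 := hrec₁ q
      have h2 := hrec₂ q
      have hf : (fun q' => A₁ (em g q') (em g q)) = (fun q' => A₂ (em g q') (em g q)) := by
        funext q'; exact e3 q' q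
      rw [hf, show (fun q' => A₁ (em g q') (Sum.inl 0))
          = (fun q' => A₂ (em g q') (Sum.inl 0)) from funext e2] at h1
      exact mul_right_cancel₀ hlam (add_right_cancel (h1.trans h2.symm))
  · rcases tri j with hj | hj | ⟨q, hj⟩ <;> subst hj
    · exact e2 p
    · rw [hfix₁, hfix₂]
    · exact e3 p q

def Dinv (g : ℕ) (lam : F) : Matrix (Fin g ⊕ Fin g) (Fin g ⊕ Fin g) F :=
  fromBlocks (lam⁻¹ • 1) 0 0 1

def Dm (g : ℕ) (lam : F) : Matrix (Fin g ⊕ Fin g) (Fin g ⊕ Fin g) F :=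
  fromBlocks (lam • 1) 0 0 1

lemma Dm_Dinv {lam : F} (hlam : lam ≠ 0) : Dm g lam * Dinv g lam = 1 := by
  rw [Dm, Dinv, fromBlocks_multiply]
  simp only [Matrix.mul_zero, Matrix.zero_mul, add_zero, zero_add, Matrix.one_mul,
    Matrix.mul_one, smul_mul_assoc, mul_smul_comm, smul_smul]
  rw [inv_mul_cancel₀ hlam, one_smul, smul_zero, smul_zero, ← fromBlocks_one]

lemma Dinv_transpose (lam : F) : (Dinv g lam)ᵀ = Dinv g lam := by
  rw [Dinv, fromBlocks_transpose]
  simp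

lemma Dinv_J (lam : F) :
    Dinv g lam * Matrix.J (Fin g) F * (Dinv g lam)ᵀ = lam⁻¹ • Matrix.J (Fin g) F := by
  rw [Dinv_transpose, Dinv, Matrix.J, fromBlocks_multiply, fromBlocks_multiply, fromBlocks_smul]
  simp

lemma toSp {lam : F} (hlam : lam ≠ 0) (C : Matrix (Fin g ⊕ Fin g) (Fin g ⊕ Fin g) F)
    (hC : Cᵀ * Matrix.J (Fin g) F * C = lam • Matrix.J (Fin g) F) :
    Dinv g lam * Cᵀ ∈ Matrix.symplecticGroup (Fin g) F := by
  rw [SymplecticGroup.mem_iff]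
  have h1 : Dinv g lam * Cᵀ * Matrix.J (Fin g) F * (Dinv g lam * Cᵀ)ᵀ
      = Dinv g lam * (Cᵀ * Matrix.J (Fin g) F * C) * (Dinv g lam)ᵀ := by
    rw [transpose_mul, transpose_transpose]; noncomm_ring
  rw [h1, hC, mul_smul_comm, smul_mul_assoc, Dinv_J, smul_smul, mul_inv_cancel₀ hlam, one_smul]

end CardSimAux

open CardSimAux in
set_option maxHeartbeats 1600000 in
/-- For every prime `ℓ`, every `g ≥ 1` (here `g+1` plays the role of `g`) and every
`λ ∈ F_ℓ^×`, the number of symplectic similitudes of `F_ℓ^{2g}` with multiplier `λ`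
having eigenvalue `1` (i.e. fixing some nonzero vector) is at most
`ℓ^{2g-1} · ((ℓ^{2g}-1)/(ℓ-1)) · |Sp_{2g-2}(F_ℓ)|` (the division is exact). -/
theorem card_similitudes_with_eigenvalue_one_le (ℓ : ℕ) (hℓ : ℓ.Prime) (g : ℕ)
    (lam : ZMod ℓ) (hlam : lam ≠ 0) :
    Nat.card {A : Matrix (Fin (g + 1) ⊕ Fin (g + 1)) (Fin (g + 1) ⊕ Fin (g + 1)) (ZMod ℓ) //
        A ∈ GSpMul (g + 1) (ZMod ℓ) lam ∧ ∃ w ≠ 0, A *ᵥ w = w} ≤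
      ℓ ^ (2 * (g + 1) - 1) * ((ℓ ^ (2 * (g + 1)) - 1) / (ℓ - 1)) *
        Nat.card (Matrix.symplecticGroup (Fin g) (ZMod ℓ)) := by
  classical
  haveI : Fact ℓ.Prime := ⟨hℓ⟩
  haveI : NeZero ℓ := ⟨hℓ.pos.ne'⟩
  set S := {A : Matrix (Fin (g + 1) ⊕ Fin (g + 1)) (Fin (g + 1) ⊕ Fin (g + 1)) (ZMod ℓ) //
        A ∈ GSpMul (g + 1) (ZMod ℓ) lam ∧ ∃ w ≠ 0, A *ᵥ w = w} with hS
  set T := {p : ((Fin (g + 1) ⊕ Fin (g + 1)) → ZMod ℓ) ×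
      Matrix (Fin (g + 1) ⊕ Fin (g + 1)) (Fin (g + 1) ⊕ Fin (g + 1)) (ZMod ℓ) //
      p.1 ≠ 0 ∧ p.2 ∈ GSpMul (g + 1) (ZMod ℓ) lam ∧ p.2 *ᵥ p.1 = p.1} with hT
  -- base vector
  set e₀ : (Fin (g + 1) ⊕ Fin (g + 1)) → ZMod ℓ := Pi.single (Sum.inr 0) 1 with he₀def
  have he₀ : e₀ ≠ 0 := by
    intro h
    have := congrFun h (Sum.inr 0)
    rw [he₀def] at this
    simp at this
  -- Step 1 : (ℓ-1) * card S ≤ card T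
  have step1 : (ℓ - 1) * Nat.card S ≤ Nat.card T := by
    have wspec : ∀ A : S, A.2.2.choose ≠ 0 ∧ A.1 *ᵥ A.2.2.choose = A.2.2.choose :=
      fun A => ⟨A.2.2.choose_spec.1, A.2.2.choose_spec.2⟩
    let f₁ : (ZMod ℓ)ˣ × S → T := fun ca =>
      ⟨((ca.1 : ZMod ℓ) • ca.2.2.2.choose, ca.2.1),
        smul_ne_zero ca.1.ne_zero (wspec ca.2).1, ca.2.2.1,
        by rw [mulVec_smul, (wspec ca.2).2]⟩
    have hf₁ : Function.Injective f₁ := by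
      rintro ⟨c, A⟩ ⟨c', A'⟩ h
      have h' := congrArg Subtype.val h
      have h2 : A.1 = A'.1 := congrArg Prod.snd h'
      have hA : A = A' := Subtype.ext h2
      subst hA
      have h1 : (c : ZMod ℓ) • A.2.2.choose = (c' : ZMod ℓ) • A.2.2.choose := congrArg Prod.fst h'
      obtain ⟨j, hj⟩ := Function.ne_iff.mp (wspec A).1
      have hcc : (c : ZMod ℓ) * A.2.2.choose j = (c' : ZMod ℓ) * A.2.2.choose j := congrFun h1 j
      have hj' : A.2.2.choose j ≠ 0 := hj
      exact Prod.ext (Units.ext (mul_right_cancel₀ hj' hcc)) rfl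
    calc (ℓ - 1) * Nat.card S = Nat.card ((ZMod ℓ)ˣ × S) := by
          rw [Nat.card_prod, Nat.card_eq_fintype_card (α := (ZMod ℓ)ˣ), ZMod.card_units]
      _ ≤ Nat.card T := Nat.card_le_card_of_injective f₁ hf₁
  -- Step 2 : conjugating matrices
  have hch : ∀ w : (Fin (g + 1) ⊕ Fin (g + 1)) → ZMod ℓ, w ≠ 0 →
      ∃ P Q : Matrix (Fin (g + 1) ⊕ Fin (g + 1)) (Fin (g + 1) ⊕ Fin (g + 1)) (ZMod ℓ),
        P * Q = 1 ∧ Q * P = 1 ∧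
          P * Matrix.J (Fin (g+1)) (ZMod ℓ) * Pᵀ = Matrix.J (Fin (g+1)) (ZMod ℓ) ∧ P *ᵥ e₀ = w :=
    fun w hw => exists_trans he₀ hw
  choose P Q hPQ hQP hPJ hPe using hch
  set AT : T → Matrix (Fin (g + 1) ⊕ Fin (g + 1)) (Fin (g + 1) ⊕ Fin (g + 1)) (ZMod ℓ) :=
    fun t => Q t.1.1 t.2.1 * t.1.2 * P t.1.1 t.2.1 with hAT
  have hU' : ∀ t : T, IsUnit (AT t) := by
    intro t
    obtain ⟨hUt, hSt⟩ := t.2.2.1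
    simp only [hAT]
    have hQu : IsUnit (Q t.1.1 t.2.1) := ⟨⟨Q t.1.1 t.2.1, P t.1.1 t.2.1,
      hQP t.1.1 t.2.1, hPQ t.1.1 t.2.1⟩, rfl⟩
    have hPu : IsUnit (P t.1.1 t.2.1) := ⟨⟨P t.1.1 t.2.1, Q t.1.1 t.2.1,
      hPQ t.1.1 t.2.1, hQP t.1.1 t.2.1⟩, rfl⟩
    exact (hQu.mul hUt).mul hPu
  have hS' : ∀ t : T, AT t * Matrix.J (Fin (g+1)) (ZMod ℓ) * (AT t)ᵀ
      = lam • Matrix.J (Fin (g+1)) (ZMod ℓ) := by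
    intro t
    have hQJ : Q t.1.1 t.2.1 * Matrix.J (Fin (g+1)) (ZMod ℓ) * (Q t.1.1 t.2.1)ᵀ
        = Matrix.J (Fin (g+1)) (ZMod ℓ) := by
      calc Q t.1.1 t.2.1 * Matrix.J (Fin (g+1)) (ZMod ℓ) * (Q t.1.1 t.2.1)ᵀ
          = Q t.1.1 t.2.1 * (P t.1.1 t.2.1 * Matrix.J (Fin (g+1)) (ZMod ℓ) * (P t.1.1 t.2.1)ᵀ)
            * (Q t.1.1 t.2.1)ᵀ := by rw [hPJ]
        _ = (Q t.1.1 t.2.1 * P t.1.1 t.2.1) * Matrix.J (Fin (g+1)) (ZMod ℓ)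
            * (Q t.1.1 t.2.1 * P t.1.1 t.2.1)ᵀ := by rw [transpose_mul]; noncomm_ring
        _ = Matrix.J (Fin (g+1)) (ZMod ℓ) := by rw [hQP]; simp
    have hA := t.2.2.1.2
    calc AT t * Matrix.J (Fin (g+1)) (ZMod ℓ) * (AT t)ᵀ
        = Q t.1.1 t.2.1 * (t.1.2 * (P t.1.1 t.2.1 * Matrix.J (Fin (g+1)) (ZMod ℓ)
            * (P t.1.1 t.2.1)ᵀ) * t.1.2ᵀ) * (Q t.1.1 t.2.1)ᵀ := by
          rw [hAT]; simp only [transpose_mul]; noncomm_ring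
      _ = Q t.1.1 t.2.1 * (lam • Matrix.J (Fin (g+1)) (ZMod ℓ)) * (Q t.1.1 t.2.1)ᵀ := by
          rw [hPJ, hA]
      _ = lam • (Q t.1.1 t.2.1 * Matrix.J (Fin (g+1)) (ZMod ℓ) * (Q t.1.1 t.2.1)ᵀ) := by
          rw [mul_smul_comm, smul_mul_assoc]
      _ = lam • Matrix.J (Fin (g+1)) (ZMod ℓ) := by rw [hQJ]
  have hfix' : ∀ t : T, ∀ i, AT t i (Sum.inr 0) = if i = Sum.inr 0 then 1 else 0 := by
    intro t
    have hv : AT t *ᵥ e₀ = e₀ := by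
      rw [hAT]
      calc (Q t.1.1 t.2.1 * t.1.2 * P t.1.1 t.2.1) *ᵥ e₀
          = Q t.1.1 t.2.1 *ᵥ (t.1.2 *ᵥ (P t.1.1 t.2.1 *ᵥ e₀)) := by
            rw [mulVec_mulVec, mulVec_mulVec]
        _ = Q t.1.1 t.2.1 *ᵥ t.1.1 := by
            rw [hPe]; exact congrArg (fun x => Q t.1.1 t.2.1 *ᵥ x) t.2.2.2
        _ = Q t.1.1 t.2.1 *ᵥ (P t.1.1 t.2.1 *ᵥ e₀) := by rw [hPe]
        _ = e₀ := by rw [mulVec_mulVec, hQP, one_mulVec]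
    intro i
    rw [he₀def] at hv
    rw [mulVec_single] at hv
    have := congrFun hv i
    simp only [Pi.smul_apply, col_apply, op_smul_eq_mul, mul_one] at this
    rw [this, Pi.single_apply]
  have hB' : ∀ t : T, ∀ j j', Bf (fun i => AT t i j) (fun i => AT t i j')
      = lam * Matrix.J (Fin (g+1)) (ZMod ℓ) j j' := fun t => cols_form (hU' t) (hS' t)
  have hC : ∀ t : T, (Matrix.of fun p q => AT t (em g p) (em g q))ᵀ
      * Matrix.J (Fin g) (ZMod ℓ) * (Matrix.of fun p q => AT t (em g p) (em g q))
      = lam • Matrix.J (Fin g) (ZMod ℓ) :=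
    fun t => small_form (hB' t) (row_b (hfix' t) (hB' t))
  set Tgt := {w : (Fin (g + 1) ⊕ Fin (g + 1)) → ZMod ℓ // w ≠ 0} ×
      (ZMod ℓ × ((Fin g ⊕ Fin g → ZMod ℓ) × Matrix.symplecticGroup (Fin g) (ZMod ℓ))) with hTgt
  have step2 : Nat.card T ≤ Nat.card Tgt := by
    let f₂ : T → Tgt := fun t =>
      (⟨t.1.1, t.2.1⟩, (AT t (Sum.inr 0) (Sum.inl 0),
        (fun q => AT t (em g q) (Sum.inl 0),
          ⟨Dinv g lam * (Matrix.of fun p q => AT t (em g p) (em g q))ᵀ,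
            toSp hlam _ (hC t)⟩)))
    have hf₂ : Function.Injective f₂ := by
      intro t₁ t₂ h
      have hw : t₁.1.1 = t₂.1.1 := congrArg Subtype.val (congrArg Prod.fst h)
      have hPeq : ∀ (w₁ w₂ : (Fin (g + 1) ⊕ Fin (g + 1)) → ZMod ℓ) (h₁ : w₁ ≠ 0) (h₂ : w₂ ≠ 0),
          w₁ = w₂ → P w₁ h₁ = P w₂ h₂ ∧ Q w₁ h₁ = Q w₂ h₂ := by
        intro w₁ w₂ h₁ h₂ he; subst he; exact ⟨rfl, rfl⟩
      have h2 : AT t₁ (Sum.inr 0) (Sum.inl 0) = AT t₂ (Sum.inr 0) (Sum.inl 0) :=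
        congrArg (fun x : Tgt => x.2.1) h
      have h3 : (fun q => AT t₁ (em g q) (Sum.inl 0))
          = (fun q => AT t₂ (em g q) (Sum.inl 0)) :=
        congrArg (fun x : Tgt => x.2.2.1) h
      have h4 : Dinv g lam * (Matrix.of fun p q => AT t₁ (em g p) (em g q))ᵀ
          = Dinv g lam * (Matrix.of fun p q => AT t₂ (em g p) (em g q))ᵀ :=
        congrArg (fun x : Tgt => (x.2.2.2 : Matrix (Fin g ⊕ Fin g) (Fin g ⊕ Fin g) (ZMod ℓ))) h
      have hCeq : (Matrix.of fun p q => AT t₁ (em g p) (em g q))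
          = (Matrix.of fun p q => AT t₂ (em g p) (em g q)) := by
        have h5 := congrArg (fun X => Dm g lam * X) h4
        simp only [← mul_assoc, Dm_Dinv hlam, one_mul] at h5
        have h6 := congrArg Matrix.transpose h5
        rwa [transpose_transpose, transpose_transpose] at h6
      have hAA : AT t₁ = AT t₂ := by
        refine stab_ext hlam (hU' t₁) (hU' t₂) (hS' t₁) (hS' t₂) (hfix' t₁) (hfix' t₂)
          h2 (fun q => congrFun h3 q) (fun p q => ?_)
        exact congrFun (congrFun (congrArg (fun M => (M : Matrix _ _ (ZMod ℓ))) hCeq) p) q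
      have hback : ∀ t : T, t.1.2 = P t.1.1 t.2.1 * AT t * Q t.1.1 t.2.1 := by
        intro t
        rw [hAT]
        calc t.1.2 = (P t.1.1 t.2.1 * Q t.1.1 t.2.1) * t.1.2
              * (P t.1.1 t.2.1 * Q t.1.1 t.2.1) := by rw [hPQ]; simp
          _ = P t.1.1 t.2.1 * (Q t.1.1 t.2.1 * t.1.2 * P t.1.1 t.2.1) * Q t.1.1 t.2.1 := by
              noncomm_ring
      have hA12 : t₁.1.2 = t₂.1.2 := by
        rw [hback t₁, hback t₂, hAA, (hPeq _ _ t₁.2.1 t₂.2.1 hw).1,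
          (hPeq _ _ t₁.2.1 t₂.2.1 hw).2]
      exact Subtype.ext (Prod.ext hw hA12)
    exact Nat.card_le_card_of_injective f₂ hf₂
  -- cardinality of the target
  have cardTgt : Nat.card Tgt
      = (ℓ ^ (2 * (g + 1)) - 1) * (ℓ * (ℓ ^ (2 * g)
          * Nat.card (Matrix.symplecticGroup (Fin g) (ZMod ℓ)))) := by
    rw [hTgt, Nat.card_prod, Nat.card_prod, Nat.card_prod]
    congr 2
    · rw [Nat.card_eq_fintype_card, Fintype.card_subtype_compl, Fintype.card_subtype_eq,
        ← Nat.card_eq_fintype_card, Nat.card_fun, Nat.card_sum, Nat.card_zmod]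
      rw [Nat.card_eq_fintype_card (α := Fin (g+1)), Fintype.card_fin,
        show g + 1 + (g + 1) = 2 * (g + 1) by omega]
    · exact Nat.card_zmod ℓ
    · rw [Nat.card_fun, Nat.card_sum, Nat.card_zmod,
        Nat.card_eq_fintype_card (α := Fin g), Fintype.card_fin,
        show g + g = 2 * g by omega]
  -- final arithmetic
  have hdvd : (ℓ - 1) ∣ ℓ ^ (2 * (g + 1)) - 1 := by
    simpa using Nat.sub_dvd_pow_sub_pow ℓ 1 (2 * (g + 1))
  obtain ⟨m, hm⟩ := hdvd
  have hℓ1 : 0 < ℓ - 1 := by have := hℓ.two_le; omega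
  have hmdiv : (ℓ ^ (2 * (g + 1)) - 1) / (ℓ - 1) = m := by
    rw [hm, Nat.mul_div_cancel_left _ hℓ1]
  have hchain : (ℓ - 1) * Nat.card S
      ≤ (ℓ - 1) * (m * (ℓ * (ℓ ^ (2 * g) * Nat.card (Matrix.symplecticGroup (Fin g) (ZMod ℓ))))) := by
    calc (ℓ - 1) * Nat.card S ≤ Nat.card T := step1
      _ ≤ Nat.card Tgt := step2
      _ = (ℓ - 1) * (m * (ℓ * (ℓ ^ (2 * g)
          * Nat.card (Matrix.symplecticGroup (Fin g) (ZMod ℓ))))) := by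
          rw [cardTgt, hm]; ring
  have hfin := Nat.le_of_mul_le_mul_left hchain hℓ1
  rw [hmdiv]
  calc Nat.card S ≤ m * (ℓ * (ℓ ^ (2 * g) * Nat.card (Matrix.symplecticGroup (Fin g) (ZMod ℓ)))) :=
        hfin
    _ = ℓ ^ (2 * (g + 1) - 1) * m * Nat.card (Matrix.symplecticGroup (Fin g) (ZMod ℓ)) := by
        have h21 : 2 * (g + 1) - 1 = 2 * g + 1 := by omega
        rw [h21, pow_succ]
        ring
end

section
/- Let A be a polarized abelian variety of dimension g over a field K with big monodromy and let ℓ₀ be as in the definition. Then for all primes ℓ ≥ ℓ₀ and every nonzero ℓ-torsion point P ∈ A[ℓ], the residue field degree satisfies [K(P):K]^{2g} ≥ [K(A[ℓ]):K], equivalently [K(P):K]^{-1} ≤ [K(A[ℓ]):K]^{-1/(2g)}. -/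
open Matrix

section MatrixAux

set_option linter.unusedSectionVars false

variable {n R : Type*} [Fintype n] [DecidableEq n] [CommRing R]

lemma myVecMulVec_mulVec (v w P : n → R) : vecMulVec v w *ᵥ P = (w ⬝ᵥ P) • v := by
  ext i
  simp [mulVec, vecMulVec_apply, dotProduct, Finset.sum_mul, Finset.mul_sum,
    mul_comm, mul_left_comm, mul_assoc]

lemma myMul_vecMulVec (N : Matrix n n R) (v w : n → R) :
    N * vecMulVec v w = vecMulVec (N *ᵥ v) w := by
  ext i j
  simp [mul_apply, vecMulVec_apply, mulVec, dotProduct, Finset.sum_mul, mul_assoc]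

lemma myVecMulVec_mul (v w : n → R) (N : Matrix n n R) :
    vecMulVec v w * N = vecMulVec v (w ᵥ* N) := by
  ext i j
  simp [mul_apply, vecMulVec_apply, vecMul, dotProduct, Finset.mul_sum, mul_assoc]

lemma myVecMul_vecMulVec (u w v : n → R) :
    u ᵥ* vecMulVec w v = (u ⬝ᵥ w) • v := by
  ext j
  simp only [vecMul, vecMulVec_apply, dotProduct, Pi.smul_apply, smul_eq_mul,
    Finset.sum_mul, mul_assoc]

lemma myVecMulVec_transpose (v w : n → R) : (vecMulVec v w)ᵀ = vecMulVec w v := by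
  ext i j
  simp [vecMulVec_apply, mul_comm]

lemma myVecMulVec_zero (v : n → R) : vecMulVec v (0 : n → R) = 0 := by
  ext i j
  simp [vecMulVec_apply]

end MatrixAux

section SymplAux

variable {l : Type*} [DecidableEq l] [Fintype l] (R : Type*) [CommRing R]

lemma myJ_mulVec_inl (v : l ⊕ l → R) (i : l) :
    (J l R *ᵥ v) (Sum.inl i) = -(v (Sum.inr i)) := by
  simp [J, mulVec, dotProduct, Fintype.sum_sum_type, fromBlocks, one_apply,
    Finset.sum_ite_eq, Pi.single_apply]

lemma myJ_mulVec_inr (v : l ⊕ l → R) (i : l) :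
    (J l R *ᵥ v) (Sum.inr i) = v (Sum.inl i) := by
  simp [J, mulVec, dotProduct, Fintype.sum_sum_type, fromBlocks, one_apply,
    Finset.sum_ite_eq, Pi.single_apply]

lemma myDot_J (v : l ⊕ l → R) : v ⬝ᵥ (J l R *ᵥ v) = 0 := by
  simp only [dotProduct, Fintype.sum_sum_type, myJ_mulVec_inl, myJ_mulVec_inr]
  rw [← Finset.sum_add_distrib]
  apply Finset.sum_eq_zero
  intro i _
  ring

lemma myJJ_mulVec (v : l ⊕ l → R) : J l R *ᵥ (J l R *ᵥ v) = -v := by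
  rw [mulVec_mulVec, J_squared, neg_mulVec, one_mulVec]

lemma myVecMul_J (v : l ⊕ l → R) : v ᵥ* J l R = -(J l R *ᵥ v) := by
  rw [show v ᵥ* J l R = v ᵥ* (-(J l R))ᵀ by rw [transpose_neg, J_transpose, neg_neg],
    vecMul_transpose, neg_mulVec]

/-- Symplectic transvections are symplectic. -/
lemma myTransvection_mem (c : R) (v : l ⊕ l → R) :
    (1 + c • vecMulVec v (-(J l R *ᵥ v))) ∈ symplecticGroup l R := by
  rw [SymplecticGroup.mem_iff]
  set w : l ⊕ l → R := -(J l R *ᵥ v) with hw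
  have hwJ : w ᵥ* J l R = -v := by
    rw [hw, Matrix.neg_vecMul, myVecMul_J, myJJ_mulVec, neg_neg]
  have hJw : J l R *ᵥ w = v := by
    rw [hw, Matrix.mulVec_neg, myJJ_mulVec, neg_neg]
  have hvw : v ⬝ᵥ w = 0 := by
    rw [hw, dotProduct_neg, myDot_J, neg_zero]
  have ht : (1 + c • vecMulVec v w)ᵀ = 1 + c • vecMulVec w v := by
    rw [transpose_add, transpose_one, transpose_smul, myVecMulVec_transpose]
  rw [ht]
  have h1 : (1 + c • vecMulVec v w) * J l R = J l R + c • (-(vecMulVec v v)) := by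
    rw [add_mul, one_mul, Matrix.smul_mul, myVecMulVec_mul, hwJ]
    congr 2
    ext i j
    simp [vecMulVec_apply]
  have e2 : J l R * (c • vecMulVec w v) = c • vecMulVec v v := by
    rw [Matrix.mul_smul, myMul_vecMulVec, hJw]
  have e3 : vecMulVec v v * vecMulVec w v = 0 := by
    rw [myVecMulVec_mul, myVecMul_vecMulVec, hvw, zero_smul, myVecMulVec_zero]
  rw [h1, mul_add, mul_one, add_mul, e2]
  rw [Matrix.smul_mul, Matrix.mul_smul, Matrix.neg_mul, e3, neg_zero, smul_zero,
    smul_zero, add_zero, smul_neg]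
  abel

end SymplAux

/-- Galois-theoretic dictionary for Villareal's lemma (Lemma 3.2):
For a polarized abelian variety `A/K` of dimension `g` with big monodromy and a prime
`ℓ ≥ ℓ₀`, the image of the mod-`ℓ` representation `ρ = ρ_{A[ℓ]} : G_K → GSp(A[ℓ])`
contains `Sp(A[ℓ])`, the degree `[K(P):K]` of the residue field of a nonzero torsion
point `P ∈ A[ℓ] ≅ F_ℓ^{2g}` equals the cardinality of the Galois orbit of `P`
(orbit–stabilizer), and `[K(A[ℓ]):K]` equals the cardinality of the image of `ρ`.
The lemma then states `[K(P):K]^{2g} ≥ [K(A[ℓ]):K]`, i.e. the cardinality of the image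
of `ρ` is at most the `2g`-th power of the cardinality of the orbit of `P`. -/
theorem residue_degree_bound (ℓ : ℕ) (hℓ : ℓ.Prime) (g : ℕ) (hg : 1 ≤ g)
    (G : Type*) [Group G]
    (ρ : G →* Matrix.GeneralLinearGroup (Fin g ⊕ Fin g) (ZMod ℓ))
    -- big monodromy at ℓ: the image of `ρ` contains `Sp_{2g}(F_ℓ)`
    (hbig : ∀ A ∈ Matrix.symplecticGroup (Fin g) (ZMod ℓ),
      ∃ σ : G, ((ρ σ : Matrix (Fin g ⊕ Fin g) (Fin g ⊕ Fin g) (ZMod ℓ))) = A)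
    (P : (Fin g ⊕ Fin g) → ZMod ℓ) (hP : P ≠ 0) :
    -- `[K(A[ℓ]):K] ≤ [K(P):K]^{2g}`
    Nat.card (Set.range (fun σ : G =>
        (ρ σ : Matrix (Fin g ⊕ Fin g) (Fin g ⊕ Fin g) (ZMod ℓ)))) ≤
      (Nat.card {w : (Fin g ⊕ Fin g) → ZMod ℓ |
        ∃ σ : G, (ρ σ : Matrix (Fin g ⊕ Fin g) (Fin g ⊕ Fin g) (ZMod ℓ)) *ᵥ P = w}) ^
        (2 * g) := by
  haveI : Fact ℓ.Prime := ⟨hℓ⟩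
  set S : Set ((Fin g ⊕ Fin g) → ZMod ℓ) :=
    {w : (Fin g ⊕ Fin g) → ZMod ℓ |
      ∃ σ : G, (ρ σ : Matrix (Fin g ⊕ Fin g) (Fin g ⊕ Fin g) (ZMod ℓ)) *ᵥ P = w} with hS
  set Im : Set (Matrix (Fin g ⊕ Fin g) (Fin g ⊕ Fin g) (ZMod ℓ)) :=
    Set.range (fun σ : G => (ρ σ : Matrix (Fin g ⊕ Fin g) (Fin g ⊕ Fin g) (ZMod ℓ)))
    with hIm
  -- P is in the orbit
  have hPS : P ∈ S := ⟨1, by simp⟩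
  -- the orbit is stable under the image
  have hInv : ∀ M ∈ Im, ∀ w ∈ S, M *ᵥ w ∈ S := by
    rintro M ⟨σ, rfl⟩ w ⟨τ, rfl⟩
    exact ⟨σ * τ, by rw [_root_.map_mul, Units.val_mul, mulVec_mulVec]⟩
  -- key: transvections move P within the orbit
  have key : ∀ (v : (Fin g ⊕ Fin g) → ZMod ℓ) (c : ZMod ℓ),
      P + (c * ((-(J (Fin g) (ZMod ℓ) *ᵥ v)) ⬝ᵥ P)) • v ∈ S := by
    intro v c
    obtain ⟨σ, hσ⟩ := hbig _ (myTransvection_mem (ZMod ℓ) c v)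
    refine ⟨σ, ?_⟩
    rw [hσ, add_mulVec, one_mulVec, smul_mulVec, myVecMulVec_mulVec,
      smul_smul]
  -- a vector pairing nontrivially with P lies in the span of the orbit
  have step : ∀ v : (Fin g ⊕ Fin g) → ZMod ℓ,
      (J (Fin g) (ZMod ℓ) *ᵥ v) ⬝ᵥ P ≠ 0 → v ∈ Submodule.span (ZMod ℓ) S := by
    intro v hv
    have h1 : P + v ∈ S := by
      have := key v (-(((J (Fin g) (ZMod ℓ) *ᵥ v) ⬝ᵥ P)⁻¹))
      have harg : -(((J (Fin g) (ZMod ℓ) *ᵥ v) ⬝ᵥ P)⁻¹) *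
          ((-(J (Fin g) (ZMod ℓ) *ᵥ v)) ⬝ᵥ P) = 1 := by
        rw [neg_dotProduct, neg_mul_neg, inv_mul_cancel₀ hv]
      rwa [harg, one_smul] at this
    have := sub_mem (Submodule.subset_span (R := ZMod ℓ) h1) (Submodule.subset_span (R := ZMod ℓ) hPS)
    simpa using this
  -- some vector pairs nontrivially with P
  obtain ⟨i, hi⟩ : ∃ i, P i ≠ 0 := by
    by_contra h
    push_neg at h
    exact hP (funext fun i => h i)
  set v₀ : (Fin g ⊕ Fin g) → ZMod ℓ :=
    (-(J (Fin g) (ZMod ℓ))) *ᵥ Pi.single i 1 with hv₀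
  have hv₀pair : (J (Fin g) (ZMod ℓ) *ᵥ v₀) ⬝ᵥ P = P i := by
    rw [hv₀, mulVec_mulVec, Matrix.mul_neg, J_squared, neg_neg, one_mulVec,
      single_dotProduct, one_mul]
  -- the orbit spans everything
  have hspan : Submodule.span (ZMod ℓ) S = ⊤ := by
    rw [Submodule.eq_top_iff']
    intro u
    by_cases hu : (J (Fin g) (ZMod ℓ) *ᵥ u) ⬝ᵥ P ≠ 0
    · exact step u hu
    · push_neg at hu
      have h1 : u + v₀ ∈ Submodule.span (ZMod ℓ) S := by
        apply step
        rw [mulVec_add, add_dotProduct, hu, zero_add, hv₀pair]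
        exact hi
      have h2 : v₀ ∈ Submodule.span (ZMod ℓ) S := by
        apply step; rw [hv₀pair]; exact hi
      have := sub_mem h1 h2
      simpa using this
  -- extract a basis from the spanning orbit
  obtain ⟨t, hts, htspan, htli⟩ := exists_linearIndependent (ZMod ℓ) S
  rw [hspan] at htspan
  haveI : Finite t := Finite.Set.subset _ (Set.subset_univ t)
  haveI : Fintype t := Fintype.ofFinite t
  let b : Module.Basis t (ZMod ℓ) ((Fin g ⊕ Fin g) → ZMod ℓ) :=
    Module.Basis.mk htli (by rw [Subtype.range_coe, htspan])
  have hcardt : Fintype.card t = 2 * g := by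
    have h := Module.finrank_eq_card_basis b
    rw [Module.finrank_pi] at h
    simp only [Fintype.card_sum, Fintype.card_fin] at h
    omega
  -- injection of the image into functions from the basis to the orbit
  have hinj : Function.Injective (fun M : Im => fun x : t =>
      (⟨(M : Matrix (Fin g ⊕ Fin g) (Fin g ⊕ Fin g) (ZMod ℓ)) *ᵥ (x : (Fin g ⊕ Fin g) → ZMod ℓ),
        hInv M M.2 x (hts x.2)⟩ : S)) := by
    intro M M' h
    have hagree : ∀ x ∈ t,
        (M : Matrix (Fin g ⊕ Fin g) (Fin g ⊕ Fin g) (ZMod ℓ)).mulVecLin x =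
        (M' : Matrix (Fin g ⊕ Fin g) (Fin g ⊕ Fin g) (ZMod ℓ)).mulVecLin x := by
      intro x hx
      have := congrArg (fun f => ((f ⟨x, hx⟩ : S) : (Fin g ⊕ Fin g) → ZMod ℓ)) h
      simpa [Matrix.mulVecLin_apply] using this
    have hlin : (M : Matrix (Fin g ⊕ Fin g) (Fin g ⊕ Fin g) (ZMod ℓ)).mulVecLin =
        (M' : Matrix (Fin g ⊕ Fin g) (Fin g ⊕ Fin g) (ZMod ℓ)).mulVecLin :=
      LinearMap.ext_on htspan hagree
    have hM : (M : Matrix (Fin g ⊕ Fin g) (Fin g ⊕ Fin g) (ZMod ℓ)) =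
        (M' : Matrix (Fin g ⊕ Fin g) (Fin g ⊕ Fin g) (ZMod ℓ)) := by
      ext j k
      have := congrArg (fun f : ((Fin g ⊕ Fin g) → ZMod ℓ) →ₗ[ZMod ℓ] ((Fin g ⊕ Fin g) → ZMod ℓ)
        => f (Pi.single k 1) j) hlin
      simpa [Matrix.mulVecLin_apply, mulVec_single] using this
    exact Subtype.ext hM
  have hcards : Nat.card Im ≤ Nat.card (t → S) :=
    Nat.card_le_card_of_injective _ hinj
  rw [Nat.card_fun] at hcards
  have hct : Nat.card t = 2 * g := by rw [Nat.card_eq_fintype_card, hcardt]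
  rw [hct] at hcards
  exact hcards
end

section
/- Every matrix A ∈ S_λ(ℓ)₀ has fixed space exactly the line F_ℓ·e_1, i.e., the set of vectors v with Av = v is the cyclic subgroup generated by e_1. -/
open Matrix

/-- The Gram matrix of the standard symplectic form in the basis `e_1, …, e_{2g}`:
block-diagonal with `g` blocks `((0,1),(-1,0))`. -/
def Jblock (g : ℕ) (R : Type*) [CommRing R] : Matrix (Fin (2 * g)) (Fin (2 * g)) R :=
  Matrix.of fun i j =>
    if (i : ℕ) % 2 = 0 ∧ (j : ℕ) = (i : ℕ) + 1 then 1
    else if (i : ℕ) % 2 = 1 ∧ (j : ℕ) + 1 = (i : ℕ) then -1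
    else 0

/-- The inclusion `{3, …, 2g} ↪ {1, …, 2g}` of indices (0-based: `i ↦ i + 2`). -/
def shift (g : ℕ) (i : Fin (2 * g - 2)) : Fin (2 * g) := ⟨(i : ℕ) + 2, by omega⟩

lemma sum_split' {M : Type*} [AddCommMonoid M] (m : ℕ) (f : Fin (m+2) → M) :
    ∑ j, f j = f 0 + f 1 + ∑ i : Fin m, f ⟨(i : ℕ) + 2, by omega⟩ := by
  rw [Fin.sum_univ_succ, Fin.sum_univ_succ, ← add_assoc]
  congr 1

lemma sum_split {M : Type*} [AddCommMonoid M] {g : ℕ} (hg : 2 ≤ g) (f : Fin (2*g) → M) :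
    ∑ j, f j = f ⟨0, lt_of_lt_of_le (by norm_num) (Nat.mul_le_mul_left 2 hg)⟩
      + f ⟨1, lt_of_lt_of_le (by norm_num) (Nat.mul_le_mul_left 2 hg)⟩
      + ∑ i : Fin (2*g-2), f (shift g i) := by
  have h : 2*g - 2 + 2 = 2*g := by omega
  have := sum_split' (2*g-2) (fun j => f (finCongr h j))
  rw [Fintype.sum_equiv (finCongr h) _ f (fun _ => rfl)] at this
  rw [this]
  rfl

/-- Every matrix `A ∈ S_λ(ℓ)₀` has fixed space exactly the line `F_ℓ·e_1`:
`A` is a symplectic similitude with multiplier `λ` fixing `e_1`, whose lower-right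
`(2g-2)×(2g-2)` block `B` has no eigenvalue `1`, and whose entry
`d = A_{1,2}` avoids the single value `−(b_1,…,b_{2g-2})(Id−B)^{-1}(d_1,…,d_{2g-2})^t`
(where `b_k = A_{1,k+2}` and `d_j = A_{j+2,2}`).  Then `{v | Av = v} = F_ℓ·e_1`. -/
theorem fixed_space_eq_line (ℓ : ℕ) (hℓ : ℓ.Prime) (g : ℕ) (hg : 2 ≤ g)
    (lam : ZMod ℓ) (hlam : lam ≠ 0)
    (A : Matrix (Fin (2 * g)) (Fin (2 * g)) (ZMod ℓ)) (hAunit : IsUnit A)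
    (hA : Aᵀ * Jblock g (ZMod ℓ) * A = lam • Jblock g (ZMod ℓ))
    (hfix : A *ᵥ Pi.single (⟨0, by omega⟩ : Fin (2 * g)) 1 =
      Pi.single (⟨0, by omega⟩ : Fin (2 * g)) 1)
    (B : Matrix (Fin (2 * g - 2)) (Fin (2 * g - 2)) (ZMod ℓ))
    (hBdef : B = Matrix.of fun i j => A (shift g i) (shift g j))
    (hB : ∀ v : Fin (2 * g - 2) → ZMod ℓ, v ≠ 0 → B *ᵥ v ≠ v)
    (hd : A (⟨0, by omega⟩ : Fin (2 * g)) (⟨1, by omega⟩ : Fin (2 * g)) ≠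
      -((fun j => A (⟨0, by omega⟩ : Fin (2 * g)) (shift g j)) ⬝ᵥ
        ((1 - B)⁻¹ *ᵥ fun j => A (shift g j) (⟨1, by omega⟩ : Fin (2 * g))))) :
    {v : Fin (2 * g) → ZMod ℓ | A *ᵥ v = v} =
      Set.range (fun c : ZMod ℓ =>
        c • (Pi.single (⟨0, by omega⟩ : Fin (2 * g)) 1 : Fin (2 * g) → ZMod ℓ)) := by
  haveI : Fact ℓ.Prime := ⟨hℓ⟩
  set i0 : Fin (2*g) := ⟨0, by omega⟩ with hi0
  set i1 : Fin (2*g) := ⟨1, by omega⟩ with hi1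
  -- column 0 of A is e0
  have hcol : ∀ i, A i i0 = if i = i0 then 1 else 0 := by
    intro i
    have := congrFun hfix i
    simpa [Matrix.mulVec_single, Pi.single_apply] using this
  -- row 1 of A is lam * e1
  have hrow : ∀ j, A i1 j = lam * (if j = i1 then 1 else 0) := by
    intro j
    have h1 := congrFun (congrFun hA i0) j
    have hJ : ∀ m : Fin (2*g), Jblock g (ZMod ℓ) i0 m = if m = i1 then 1 else 0 := by
      intro m
      simp only [Jblock, Matrix.of_apply, hi0, hi1]
      rcases eq_or_ne m i1 with h | h
      · subst h; simp [hi1]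
      · have : (m : ℕ) ≠ 1 := fun hc => h (Fin.ext hc)
        simp [this, Fin.ext_iff]
    have hL : (Aᵀ * Jblock g (ZMod ℓ) * A) i0 j = A i1 j := by
      rw [Matrix.mul_apply]
      have hrow0 : ∀ m, (Aᵀ * Jblock g (ZMod ℓ)) i0 m = if m = i1 then 1 else 0 := by
        intro m
        rw [Matrix.mul_apply]
        rw [Finset.sum_eq_single i0]
        · rw [Matrix.transpose_apply, hcol, hJ]; simp
        · intro k _ hk
          rw [Matrix.transpose_apply, hcol]; simp [hk]
        · simp
      simp only [hrow0]
      rw [Finset.sum_eq_single i1]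
      · simp
      · intro b _ hb; simp [hb]
      · simp
    rw [hL] at h1
    rw [h1]
    simp [hJ j]
  -- invertibility of 1 - B
  have hker : ∀ x : Fin (2*g-2) → ZMod ℓ, (1 - B) *ᵥ x = 0 → x = 0 := by
    intro x hx
    by_contra hx0
    apply hB x hx0
    have hx' : x - B *ᵥ x = 0 := by
      rw [← hx]; rw [Matrix.sub_mulVec, Matrix.one_mulVec]
    exact (sub_eq_zero.mp hx').symm
  have hinj : Function.Injective ((1 - B).mulVec) := by
    intro x y hxy
    have : (1 - B) *ᵥ (x - y) = 0 := by
      rw [Matrix.mulVec_sub, hxy, sub_self]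
    exact sub_eq_zero.mp (hker _ this)
  have hunit : IsUnit (1 - B) := Matrix.mulVec_injective_iff_isUnit.mp hinj
  have hinv : (1 - B)⁻¹ * (1 - B) = 1 :=
    Matrix.nonsing_inv_mul _ ((Matrix.isUnit_iff_isUnit_det _).mp hunit)
  ext v
  simp only [Set.mem_setOf_eq, Set.mem_range]
  constructor
  · intro hv
    -- components
    set w : Fin (2*g-2) → ZMod ℓ := fun i => v (shift g i) with hw
    set dv : Fin (2*g-2) → ZMod ℓ := fun j => A (shift g j) i1 with hdv
    have hshift_ne0 : ∀ i : Fin (2*g-2), shift g i ≠ i0 := by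
      intro i hc
      have : (i : ℕ) + 2 = 0 := congrArg Fin.val hc
      omega
    -- key: (1 - B) *ᵥ w = v i1 • dv
    have hkey : (1 - B) *ᵥ w = v i1 • dv := by
      funext i
      have hvi := congrFun hv (shift g i)
      rw [Matrix.mulVec, dotProduct] at hvi
      rw [sum_split hg (fun j => A (shift g i) j * v j)] at hvi
      rw [hcol (shift g i)] at hvi
      simp only [hshift_ne0 i, if_false, zero_mul, zero_add] at hvi
      have hBsum : ∑ k : Fin (2*g-2), A (shift g i) (shift g k) * v (shift g k)
          = (B *ᵥ w) i := by
        rw [Matrix.mulVec, dotProduct, hBdef]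
        rfl
      rw [hBsum] at hvi
      have hvi' : A (shift g i) i1 * v i1 + (B *ᵥ w) i = w i := hvi
      simp only [Matrix.sub_mulVec, Matrix.one_mulVec, Pi.sub_apply, Pi.smul_apply,
        smul_eq_mul, hdv]
      linear_combination -hvi'
    rcases eq_or_ne (v i1) 0 with h1 | h1
    · -- w = 0, v = v i0 • e0
      have hw0 : w = 0 := by
        have : (1 - B) *ᵥ w = (1 - B) *ᵥ 0 := by
          rw [hkey, h1, Matrix.mulVec_zero, zero_smul]
        exact hinj this
      refine ⟨v i0, ?_⟩
      funext j
      simp only [Pi.smul_apply, smul_eq_mul, Pi.single_apply]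
      rcases Nat.lt_or_ge (j : ℕ) 2 with hj | hj
      · interval_cases h : (j : ℕ)
        · have : j = i0 := Fin.ext h
          subst this; simp
        · have : j = i1 := Fin.ext h
          have hne : j ≠ i0 := by subst this; simp [hi0, hi1, Fin.ext_iff]
          rw [this, h1]
          simp [this, hi0, hi1, Fin.ext_iff]
      · have hj2 : j = shift g ⟨(j : ℕ) - 2, by omega⟩ := by
          apply Fin.ext; simp [shift]; omega
        have : v j = 0 := by
          rw [hj2]
          exact congrFun hw0 ⟨(j : ℕ) - 2, by omega⟩
        rw [this]
        have : j ≠ i0 := by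
          intro hc; rw [hc] at hj; simp [hi0] at hj
        simp [this]
    · -- contradiction with hd
      exfalso
      have hwval : w = v i1 • ((1 - B)⁻¹ *ᵥ dv) := by
        have := congrArg (fun x => (1 - B)⁻¹ *ᵥ x) hkey
        simpa [Matrix.mulVec_mulVec, hinv, Matrix.one_mulVec, Matrix.mulVec_smul] using this
      have hv0 := congrFun hv i0
      rw [Matrix.mulVec, dotProduct] at hv0
      rw [sum_split hg (fun j => A i0 j * v j)] at hv0
      rw [hcol i0] at hv0
      simp only [eq_self_iff_true, if_true, one_mul] at hv0
      have hv0' : v i0 + A i0 i1 * v i1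
          + ∑ i : Fin (2*g-2), A i0 (shift g i) * w i = v i0 := hv0
      have : A i0 i1 * v i1 + ∑ i : Fin (2*g-2), A i0 (shift g i) * w i = 0 := by
        linear_combination hv0'
      rw [hwval] at this
      apply hd
      have hne := h1
      have hexp : ∑ i : Fin (2*g-2), A i0 (shift g i) * (v i1 • ((1 - B)⁻¹ *ᵥ dv)) i
          = v i1 * ((fun j => A i0 (shift g j)) ⬝ᵥ ((1 - B)⁻¹ *ᵥ dv)) := by
        rw [dotProduct, Finset.mul_sum]
        apply Finset.sum_congr rfl
        intro i _
        simp [smul_eq_mul]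
        ring
      rw [hexp] at this
      have : v i1 * (A i0 i1 + (fun j => A i0 (shift g j)) ⬝ᵥ ((1 - B)⁻¹ *ᵥ dv)) = 0 := by
        linear_combination this
      rcases mul_eq_zero.mp this with h | h
      · exact absurd h hne
      · linear_combination h
  · rintro ⟨c, rfl⟩
    rw [Matrix.mulVec_smul, hfix]
end
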